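/- Let 𝒳 be a finite set. Suppose ω_n ∈ M_n(𝒳) converges to ω with ω(a) > 0 for all a ∈ 𝒳, ϖ_n ∈ M̃_{*,n}(𝒳×𝒳) converges to ϖ, ν is a probability measure on 𝒳×ℕ^𝒳 with 𝒳-marginal ν₁ = ω, and (ϖ,ν) is sub-consistent. Then for every ε > 0 there exists n(ε) such that for all n ≥ n(ε) there exists a probability measure ν_n on 𝒳×ℕ^𝒳 with n·ν_n(a,ℓ) ∈ ℕ for all (a,ℓ), Φ(ν_n) = (ω_n,ϖ_n), and d(ν_n,ν) ≤ ε. -/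

import Mathlib

open Filter Topology

namespace ColoredLDP

noncomputable section

/-- Extended logarithm: `⊥` at nonpositive arguments. -/
def elog (x : ℝ) : EReal := if x ≤ 0 then (⊥ : EReal) else ((Real.log x : ℝ) : EReal)

open Classical in
/-- Relative entropy of finite measures on a finite set, with value `⊤` if
absolute continuity fails. -/
def relEntFin {Y : Type} [Fintype Y] (ν ρ : Y → ℝ) : EReal :=
  if ∀ y, ρ y = 0 → ν y = 0 then (((∑ y, ν y * Real.log (ν y / ρ y)) : ℝ) : EReal)
  else (⊤ : EReal)

open Classical in
/-- Relative entropy of measures on a countable set, with value `⊤` if absolute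
continuity fails or the defining series is not (absolutely) summable. -/
def relEntC {Y : Type} (ν ρ : Y → ℝ) : EReal :=
  if (∀ y, ρ y = 0 → ν y = 0) ∧ Summable (fun y => ν y * Real.log (ν y / ρ y)) then
    (((∑' y, ν y * Real.log (ν y / ρ y)) : ℝ) : EReal)
  else (⊤ : EReal)

variable {𝒳 : Type} [Fintype 𝒳] [DecidableEq 𝒳]

/-- `𝔥_C(ϖ‖ω) = H(ϖ‖Cω⊗ω) + ‖Cω⊗ω‖ − ‖ϖ‖`. -/
def hC (C : 𝒳 → 𝒳 → ℝ) (ϖ : 𝒳 → 𝒳 → ℝ) (ω : 𝒳 → ℝ) : EReal :=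
  relEntFin (fun q : 𝒳 × 𝒳 => ϖ q.1 q.2) (fun q : 𝒳 × 𝒳 => C q.1 q.2 * ω q.1 * ω q.2)
    + (((∑ a, ∑ b, C a b * ω a * ω b) : ℝ) : EReal) - (((∑ a, ∑ b, ϖ a b) : ℝ) : EReal)

/-- A probability mass function. -/
def IsPMF {Y : Type} (ν : Y → ℝ) : Prop := (∀ y, 0 ≤ ν y) ∧ HasSum ν 1

/-- The `𝒳`-marginal `ν₁` of a measure on `𝒳 × ℕ^𝒳`. -/
def marg (ν : 𝒳 × (𝒳 → ℕ) → ℝ) (a : 𝒳) : ℝ := ∑' ℓ : 𝒳 → ℕ, ν (a, ℓ)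

/-- The measure `⟨ν(·,ℓ), ℓ(·)⟩`, the second component of `Φ(ν)`. -/
def pairOf (ν : 𝒳 × (𝒳 → ℕ) → ℝ) (a b : 𝒳) : ℝ := ∑' ℓ : 𝒳 → ℕ, ν (a, ℓ) * (ℓ b : ℝ)

/-- Sub-consistency of a pair `(ϖ, ν)`. -/
def SubConsistent (ϖ : 𝒳 → 𝒳 → ℝ) (ν : 𝒳 × (𝒳 → ℕ) → ℝ) : Prop :=
  ∀ a b : 𝒳, (∑' ℓ : 𝒳 → ℕ, ENNReal.ofReal (ν (a, ℓ) * (ℓ b : ℝ))) ≤ ENNReal.ofReal (ϖ a b)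

/-- The measure with colour law `ω` under which the neighbourhood counts are independent
Poisson variables with means `ϖ(a,b)/ω(a)`; `Q[ϖ,ν]` is `Qof ϖ ν₁`. -/
def Qof (ϖ : 𝒳 → 𝒳 → ℝ) (ω : 𝒳 → ℝ) (x : 𝒳 × (𝒳 → ℕ)) : ℝ :=
  ω x.1 * ∏ b : 𝒳,
    Real.exp (-(ϖ x.1 b / ω x.1)) * (ϖ x.1 b / ω x.1) ^ (x.2 b) / (Nat.factorial (x.2 b) : ℝ)

/-- The set of possible (ordered) edges on `n` vertices. -/
abbrev Edge (n : ℕ) := {e : Fin n × Fin n // e.1 < e.2}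

/-- A coloured graph on `n` vertices: a colouring together with an edge set. -/
abbrev Config (𝒳 : Type) (n : ℕ) := (Fin n → 𝒳) × Finset (Edge n)

/-- The probability weight of a configuration under the coloured random graph law. -/
def wt {n : ℕ} (μ : 𝒳 → ℝ) (p : 𝒳 → 𝒳 → ℝ) (x : Config 𝒳 n) : ℝ :=
  (∏ v, μ (x.1 v)) *
    ∏ e : Edge n,
      if e ∈ x.2 then p (x.1 e.1.1) (x.1 e.1.2) else 1 - p (x.1 e.1.1) (x.1 e.1.2)

/-- The law of the coloured random graph, evaluated on an event. -/
def graphP (𝒳 : Type) [Fintype 𝒳] [DecidableEq 𝒳] (n : ℕ) (μ : 𝒳 → ℝ) (p : 𝒳 → 𝒳 → ℝ)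
    (A : Set (Config 𝒳 n)) : ℝ :=
  ∑ x : Config 𝒳 n, A.indicator (wt μ p) x

/-- Conditional probability for the coloured random graph. -/
def condP (𝒳 : Type) [Fintype 𝒳] [DecidableEq 𝒳] (n : ℕ) (μ : 𝒳 → ℝ) (p : 𝒳 → 𝒳 → ℝ)
    (A B : Set (Config 𝒳 n)) : ℝ :=
  graphP 𝒳 n μ p (A ∩ B) / graphP 𝒳 n μ p B

/-- Conditional expectation for the coloured random graph. -/
def condE (𝒳 : Type) [Fintype 𝒳] [DecidableEq 𝒳] (n : ℕ) (μ : 𝒳 → ℝ) (p : 𝒳 → 𝒳 → ℝ)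
    (f : Config 𝒳 n → ℝ) (B : Set (Config 𝒳 n)) : ℝ :=
  (∑ x : Config 𝒳 n, B.indicator (fun x => wt μ p x * f x) x) / graphP 𝒳 n μ p B

/-- The empirical colour measure `L¹`. -/
def empColor {n : ℕ} (x : Config 𝒳 n) (a : 𝒳) : ℝ :=
  ((Finset.univ.filter (fun v : Fin n => x.1 v = a)).card : ℝ) / n

/-- The empirical pair measure `L²`. -/
def empPair {n : ℕ} (x : Config 𝒳 n) (a b : 𝒳) : ℝ :=
  (∑ e ∈ x.2, ((if x.1 e.1.1 = a ∧ x.1 e.1.2 = b then (1:ℝ) else 0) +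
    (if x.1 e.1.2 = a ∧ x.1 e.1.1 = b then (1:ℝ) else 0))) / n

/-- The number of neighbours of `v` of colour `b`. -/
def locDeg {n : ℕ} (x : Config 𝒳 n) (v : Fin n) (b : 𝒳) : ℕ :=
  (x.2.filter (fun e => (e.1.1 = v ∧ x.1 e.1.2 = b) ∨ (e.1.2 = v ∧ x.1 e.1.1 = b))).card

/-- The empirical neighbourhood measure `M`. -/
def empNbhd {n : ℕ} (x : Config 𝒳 n) (y : 𝒳 × (𝒳 → ℕ)) : ℝ :=
  ((Finset.univ.filter (fun v : Fin n =>
      x.1 v = y.1 ∧ (fun b => locDeg x v b) = y.2)).card : ℝ) / n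

/-- Total variation distance between measures on `𝒳 × ℕ^𝒳`. -/
def dTV (ν ν' : 𝒳 × (𝒳 → ℕ) → ℝ) : ℝ := (1 / 2) * ∑' y, |ν y - ν' y|

end
end ColoredLDP

namespace ColoredLDP

set_option maxHeartbeats 3000000 in
lemma exists_good {𝒳 : Type} [Fintype 𝒳] [DecidableEq 𝒳] (n : ℕ) (hn : 1 ≤ n)
    (ωn : 𝒳 → ℝ) (hωn1 : ∑ a, ωn a = 1)
    (k : 𝒳 → ℕ) (hk : ∀ a, (n:ℝ) * ωn a = k a)
    (ϖn : 𝒳 → 𝒳 → ℝ)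
    (K : 𝒳 → 𝒳 → ℕ) (hK : ∀ a b, (n:ℝ) * ϖn a b = K a b)
    (ωl : 𝒳 → ℝ) (ϖl : 𝒳 → 𝒳 → ℝ)
    (ν : (𝒳 × (𝒳 → ℕ)) → ℝ) (hν0 : ∀ y, 0 ≤ ν y) (hν1 : HasSum ν 1)
    (hmarg : ∀ a, marg ν a = ωl a)
    (hsubfin : ∀ (a b : 𝒳) (G : Finset (𝒳 → ℕ)), ∑ ℓ ∈ G, ν (a,ℓ) * (ℓ b : ℝ) ≤ ϖl a b)
    (δ δ' : ℝ) (hδ : 0 < δ) (hδ1 : δ ≤ 1/2) (hδ'0 : 0 ≤ δ')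
    (S : Finset (𝒳 × (𝒳 → ℕ))) (hS : 1 - δ' ≤ ∑ y ∈ S, ν y)
    (h1 : ∀ a, (1-δ) * ωl a + 1/n < ωn a)
    (h2 : ∀ a b, (1-δ) * ϖl a b ≤ ϖn a b) :
    ∃ νn : (𝒳 × (𝒳 → ℕ)) → ℝ, IsPMF νn ∧
      (∀ y, ∃ c : ℕ, (n:ℝ) * νn y = c) ∧ (marg νn = ωn) ∧
      (∀ a b, pairOf νn a b = ϖn a b) ∧
      dTV νn ν ≤ δ + δ' + S.card / n := by
  classical
  have hn0 : (0:ℝ) < n := by exact_mod_cast hn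
  have hn0' : (n:ℝ) ≠ 0 := ne_of_gt hn0
  have h1δ : (0:ℝ) < 1 - δ := by linarith
  -- the rounded-down part
  set m : 𝒳 × (𝒳 → ℕ) → ℕ := fun y => if y ∈ S then ⌊(1-δ) * ((n:ℝ) * ν y)⌋₊ else 0 with hm
  have hm_le : ∀ y, (m y : ℝ) ≤ (1-δ) * ((n:ℝ) * ν y) := by
    intro y
    have hnn : 0 ≤ (1-δ) * ((n:ℝ) * ν y) := by
      have := hν0 y
      have : (0:ℝ) ≤ (n:ℝ) * ν y := by positivity
      nlinarith
    by_cases hy : y ∈ S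
    · simp only [hm, hy, if_pos]
      exact Nat.floor_le hnn
    · simp only [hm, hy, if_neg, not_false_iff, Nat.cast_zero]
      exact hnn
  have hm_ge : ∀ y ∈ S, (1-δ) * ((n:ℝ) * ν y) - 1 ≤ (m y : ℝ) := by
    intro y hy
    simp only [hm, hy, if_pos]
    have := Nat.lt_floor_add_one ((1-δ) * ((n:ℝ) * ν y))
    linarith
  have hm_zero : ∀ y, y ∉ S → m y = 0 := by intro y hy; simp [hm, hy]
  set Mtot : 𝒳 → ℕ := fun a => ∑ y ∈ S.filter (fun y => y.1 = a), m y with hMtot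
  set Msum : 𝒳 → 𝒳 → ℕ := fun a b => ∑ y ∈ S.filter (fun y => y.1 = a), m y * y.2 b with hMsum
  -- reindexing the fiber of S over a by the second coordinate
  have himg : ∀ (a : 𝒳) (f : (𝒳 → ℕ) → ℝ),
      ∑ ℓ ∈ (S.filter (fun y => y.1 = a)).image Prod.snd, f ℓ
        = ∑ y ∈ S.filter (fun y => y.1 = a), f y.2 := by
    intro a f
    refine Finset.sum_image ?_
    intro y hy z hz hyz
    have hy1 : y.1 = a := (Finset.mem_filter.1 hy).2
    have hz1 : z.1 = a := (Finset.mem_filter.1 hz).2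
    exact Prod.ext (hy1.trans hz1.symm) hyz
  have hmem_img : ∀ (a : 𝒳) (ℓ : 𝒳 → ℕ), (a, ℓ) ∈ S →
      ℓ ∈ (S.filter (fun y => y.1 = a)).image Prod.snd := by
    intro a ℓ h
    exact Finset.mem_image.2 ⟨(a,ℓ), Finset.mem_filter.2 ⟨h, rfl⟩, rfl⟩
  have hνa_summ : ∀ a : 𝒳, Summable (fun ℓ : 𝒳 → ℕ => ν (a, ℓ)) := fun a =>
    hν1.summable.prod_factor a
  -- fiber sums of ν
  have hfib : ∀ a : 𝒳, ∑ y ∈ S.filter (fun y => y.1 = a), ν y ≤ ωl a := by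
    intro a
    have h1' : ∑ y ∈ S.filter (fun y => y.1 = a), ν y
        = ∑ ℓ ∈ (S.filter (fun y => y.1 = a)).image Prod.snd, ν (a, ℓ) := by
      rw [himg a (fun ℓ => ν (a, ℓ))]
      refine Finset.sum_congr rfl ?_
      intro y hy
      have hy1 : y.1 = a := (Finset.mem_filter.1 hy).2
      rw [← hy1]
    rw [h1', ← hmarg a, marg]
    exact Summable.sum_le_tsum _ (fun ℓ _ => hν0 _) (hνa_summ a)
  have hfib2 : ∀ a b : 𝒳, ∑ y ∈ S.filter (fun y => y.1 = a), ν y * (y.2 b : ℝ) ≤ ϖl a b := by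
    intro a b
    have h1' : ∑ y ∈ S.filter (fun y => y.1 = a), ν y * (y.2 b : ℝ)
        = ∑ ℓ ∈ (S.filter (fun y => y.1 = a)).image Prod.snd, ν (a, ℓ) * (ℓ b : ℝ) := by
      rw [himg a (fun ℓ => ν (a, ℓ) * (ℓ b : ℝ))]
      refine Finset.sum_congr rfl ?_
      intro y hy
      have hy1 : y.1 = a := (Finset.mem_filter.1 hy).2
      rw [← hy1]
    rw [h1']
    exact hsubfin a b _
  -- real bounds on the fiber totals
  have hMtot_le : ∀ a, (Mtot a : ℝ) ≤ (1-δ) * ((n:ℝ) * ωl a) := by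
    intro a
    have : (Mtot a : ℝ) = ∑ y ∈ S.filter (fun y => y.1 = a), (m y : ℝ) := by
      simp [hMtot]
    rw [this]
    calc ∑ y ∈ S.filter (fun y => y.1 = a), (m y : ℝ)
        ≤ ∑ y ∈ S.filter (fun y => y.1 = a), (1-δ) * ((n:ℝ) * ν y) :=
          Finset.sum_le_sum (fun y _ => hm_le y)
      _ = (1-δ) * ((n:ℝ) * ∑ y ∈ S.filter (fun y => y.1 = a), ν y) := by
          rw [Finset.mul_sum, Finset.mul_sum]
      _ ≤ (1-δ) * ((n:ℝ) * ωl a) := by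
          exact mul_le_mul_of_nonneg_left
            (mul_le_mul_of_nonneg_left (hfib a) hn0.le) h1δ.le
  have hMsum_le : ∀ a b, (Msum a b : ℝ) ≤ (1-δ) * ((n:ℝ) * ϖl a b) := by
    intro a b
    have : (Msum a b : ℝ) = ∑ y ∈ S.filter (fun y => y.1 = a), (m y : ℝ) * (y.2 b : ℝ) := by
      simp [hMsum]
    rw [this]
    calc ∑ y ∈ S.filter (fun y => y.1 = a), (m y : ℝ) * (y.2 b : ℝ)
        ≤ ∑ y ∈ S.filter (fun y => y.1 = a), (1-δ) * ((n:ℝ) * ν y) * (y.2 b : ℝ) := by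
          refine Finset.sum_le_sum (fun y _ => ?_)
          exact mul_le_mul_of_nonneg_right (hm_le y) (by positivity)
      _ = (1-δ) * ((n:ℝ) * ∑ y ∈ S.filter (fun y => y.1 = a), ν y * (y.2 b : ℝ)) := by
          rw [Finset.mul_sum, Finset.mul_sum]
          exact Finset.sum_congr rfl fun x _ => by ring
      _ ≤ (1-δ) * ((n:ℝ) * ϖl a b) := by
          exact mul_le_mul_of_nonneg_left
            (mul_le_mul_of_nonneg_left (hfib2 a b) hn0.le) h1δ.le
  -- integer inequalities
  have hMtot_lt : ∀ a, Mtot a + 1 ≤ k a := by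
    intro a
    have hr : (Mtot a : ℝ) + 1 ≤ (k a : ℝ) := by
      have h1a := h1 a
      have hka : (k a : ℝ) = (n:ℝ) * ωn a := (hk a).symm
      have : (1-δ) * ((n:ℝ) * ωl a) + 1 < (n:ℝ) * ωn a := by
        have := mul_lt_mul_of_pos_left h1a hn0
        have hne : (n:ℝ) * ((1-δ) * ωl a + 1/n) = (1-δ)*((n:ℝ) * ωl a) + 1 := by
          field_simp
        linarith [this, hne ▸ this]
      linarith [hMtot_le a]
    exact_mod_cast hr
  have hMsum_le_K : ∀ a b, Msum a b ≤ K a b := by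
    intro a b
    have hr : (Msum a b : ℝ) ≤ (K a b : ℝ) := by
      have := hMsum_le a b
      have h2' := h2 a b
      have : (1-δ) * ((n:ℝ) * ϖl a b) ≤ (n:ℝ) * ϖn a b := by nlinarith
      rw [← hK a b]
      linarith [hMsum_le a b]
    exact_mod_cast hr
  set R : 𝒳 → ℕ := fun a => k a - Mtot a with hR
  have hR1 : ∀ a, 1 ≤ R a := fun a => by have := hMtot_lt a; simp only [hR]; omega
  have hRcast : ∀ a, (R a : ℝ) = (k a : ℝ) - (Mtot a : ℝ) := fun a => by
    have := hMtot_lt a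
    simp only [hR]
    push_cast [Nat.cast_sub (by omega : Mtot a ≤ k a)]
    ring
  set sv : 𝒳 → (𝒳 → ℕ) := fun a b => K a b - Msum a b with hsv
  have hsvcast : ∀ a b, (sv a b : ℝ) = (K a b : ℝ) - (Msum a b : ℝ) := fun a b => by
    have := hMsum_le_K a b
    simp only [hsv]
    push_cast [Nat.cast_sub this]
    ring
  set c : 𝒳 × (𝒳 → ℕ) → ℕ := fun y =>
    m y + (if y.2 = sv y.1 then 1 else 0) + (if y.2 = 0 then R y.1 - 1 else 0) with hc
  set νn : 𝒳 × (𝒳 → ℕ) → ℝ := fun y => (c y : ℝ) / n with hνn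
  set La : 𝒳 → Finset (𝒳 → ℕ) := fun a =>
    ((S.filter (fun y => y.1 = a)).image Prod.snd) ∪ {sv a} ∪ {0} with hLa
  have hsv_mem : ∀ a, sv a ∈ La a := fun a => by
    simp [hLa]
  have hzero_mem : ∀ a, (0 : 𝒳 → ℕ) ∈ La a := fun a => by simp [hLa]
  have himg_sub : ∀ a, ((S.filter (fun y => y.1 = a)).image Prod.snd) ⊆ La a := fun a => by
    intro ℓ hℓ; simp [hLa, hℓ]
  have hc_zero : ∀ (a : 𝒳) (ℓ : 𝒳 → ℕ), ℓ ∉ La a → c (a, ℓ) = 0 := by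
    intro a ℓ hℓ
    have h1' : (a, ℓ) ∉ S := fun h => hℓ (himg_sub a (hmem_img a ℓ h))
    have h2' : ℓ ≠ sv a := fun h => hℓ (h ▸ hsv_mem a)
    have h3' : ℓ ≠ 0 := fun h => hℓ (h ▸ hzero_mem a)
    simp [hc, hm_zero _ h1', h2', h3']
  -- fiber sums of c
  have hsum_m : ∀ a, ∑ ℓ ∈ La a, m (a, ℓ) = Mtot a := by
    intro a
    have e1 : ∑ ℓ ∈ ((S.filter (fun y => y.1 = a)).image Prod.snd), m (a, ℓ) = Mtot a := by
      rw [Finset.sum_image ?_]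
      · refine Finset.sum_congr rfl ?_
        intro y hy
        have hy1 : y.1 = a := (Finset.mem_filter.1 hy).2
        rw [← hy1]
      · intro y hy z hz hyz
        have hy1 : y.1 = a := (Finset.mem_filter.1 hy).2
        have hz1 : z.1 = a := (Finset.mem_filter.1 hz).2
        exact Prod.ext (hy1.trans hz1.symm) hyz
    rw [← e1]
    refine (Finset.sum_subset (himg_sub a) ?_).symm
    intro ℓ hℓ hℓ2
    by_cases h : (a, ℓ) ∈ S
    · exact absurd (hmem_img a ℓ h) hℓ2
    · exact hm_zero _ h
  have hsum_mb : ∀ a b, ∑ ℓ ∈ La a, m (a, ℓ) * ℓ b = Msum a b := by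
    intro a b
    have e1 : ∑ ℓ ∈ ((S.filter (fun y => y.1 = a)).image Prod.snd), m (a, ℓ) * ℓ b
        = Msum a b := by
      rw [Finset.sum_image ?_]
      · refine Finset.sum_congr rfl ?_
        intro y hy
        have hy1 : y.1 = a := (Finset.mem_filter.1 hy).2
        rw [← hy1]
      · intro y hy z hz hyz
        have hy1 : y.1 = a := (Finset.mem_filter.1 hy).2
        have hz1 : z.1 = a := (Finset.mem_filter.1 hz).2
        exact Prod.ext (hy1.trans hz1.symm) hyz
    rw [← e1]
    refine (Finset.sum_subset (himg_sub a) ?_).symm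
    intro ℓ hℓ hℓ2
    by_cases h : (a, ℓ) ∈ S
    · exact absurd (hmem_img a ℓ h) hℓ2
    · simp [hm_zero _ h]
  have hsum_c : ∀ a, ∑ ℓ ∈ La a, c (a, ℓ) = k a := by
    intro a
    have : ∑ ℓ ∈ La a, c (a, ℓ) = (∑ ℓ ∈ La a, m (a, ℓ))
        + (∑ ℓ ∈ La a, if ℓ = sv a then 1 else 0)
        + (∑ ℓ ∈ La a, if ℓ = 0 then R a - 1 else 0) := by
      simp only [hc, Finset.sum_add_distrib]
    rw [this, hsum_m a, Finset.sum_ite_eq' (La a) (sv a) (fun _ => 1),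
      Finset.sum_ite_eq' (La a) (0 : 𝒳 → ℕ) (fun _ => R a - 1),
      if_pos (hsv_mem a), if_pos (hzero_mem a)]
    have := hMtot_lt a
    have := hR1 a
    simp only [hR] at *
    omega
  have hsum_cb : ∀ a b, ∑ ℓ ∈ La a, c (a, ℓ) * ℓ b = K a b := by
    intro a b
    have : ∑ ℓ ∈ La a, c (a, ℓ) * ℓ b = (∑ ℓ ∈ La a, m (a, ℓ) * ℓ b)
        + (∑ ℓ ∈ La a, if ℓ = sv a then sv a b else 0)
        + (∑ ℓ ∈ La a, if ℓ = 0 then (R a - 1) * ((0:𝒳 → ℕ) b) else 0) := by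
      simp only [hc]
      rw [← Finset.sum_add_distrib, ← Finset.sum_add_distrib]
      refine Finset.sum_congr rfl ?_
      intro ℓ _
      rw [add_mul, add_mul]
      congr 1
      · congr 1
        by_cases h1' : ℓ = sv a
        · subst h1'; simp
        · simp [h1']
      · by_cases h2' : ℓ = 0
        · subst h2'; simp
        · simp [h2']
    rw [this, hsum_mb a b, Finset.sum_ite_eq' (La a) (sv a) (fun ℓ => sv a b),
      Finset.sum_ite_eq' (La a) (0 : 𝒳 → ℕ) (fun ℓ => (R a - 1) * ((0:𝒳 → ℕ) b)),
      if_pos (hsv_mem a), if_pos (hzero_mem a)]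
    have h0b : ((0:𝒳 → ℕ) b) = 0 := rfl
    rw [h0b, Nat.mul_zero, Nat.add_zero]
    have hKge := hMsum_le_K a b
    have hsvv : sv a b = K a b - Msum a b := rfl
    rw [hsvv]
    exact Nat.add_sub_cancel' hKge
  -- marginal of νn
  have hνn_zero_fib : ∀ (a : 𝒳) (ℓ : 𝒳 → ℕ), ℓ ∉ La a → νn (a, ℓ) = 0 := by
    intro a ℓ hℓ
    simp [hνn, hc_zero a ℓ hℓ]
  have hsumνn_fib : ∀ a, ∑ ℓ ∈ La a, νn (a, ℓ) = ((k a : ℕ) : ℝ) / n := by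
    intro a
    have h' : ∑ ℓ ∈ La a, νn (a, ℓ) = ((∑ ℓ ∈ La a, c (a, ℓ) : ℕ) : ℝ) / n := by
      rw [Nat.cast_sum, Finset.sum_div]
    rw [h', hsum_c a]
  have hmargn : ∀ a, marg νn a = ωn a := by
    intro a
    have h0 : marg νn a = ∑ ℓ ∈ La a, νn (a, ℓ) :=
      tsum_eq_sum (fun ℓ hℓ => hνn_zero_fib a ℓ hℓ)
    rw [h0, hsumνn_fib a, div_eq_iff hn0']
    linarith [hk a]
  have hpairn : ∀ a b, pairOf νn a b = ϖn a b := by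
    intro a b
    have hz : ∀ ℓ ∉ La a, νn (a, ℓ) * ((ℓ b : ℕ) : ℝ) = 0 := by
      intro ℓ hℓ
      rw [hνn_zero_fib a ℓ hℓ, zero_mul]
    have h0 : pairOf νn a b = ∑ ℓ ∈ La a, νn (a, ℓ) * ((ℓ b : ℕ) : ℝ) :=
      tsum_eq_sum hz
    rw [h0]
    have : ∑ ℓ ∈ La a, νn (a, ℓ) * ((ℓ b : ℕ) : ℝ)
        = ((∑ ℓ ∈ La a, c (a, ℓ) * ℓ b : ℕ) : ℝ) / n := by
      rw [Nat.cast_sum, Finset.sum_div]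
      refine Finset.sum_congr rfl ?_
      intro ℓ _
      simp only [hνn]
      push_cast
      ring
    rw [this, hsum_cb a b, div_eq_iff hn0']
    linarith [hK a b]
  -- global support
  set Lbig : Finset (𝒳 → ℕ) := Finset.univ.biUnion La with hLbig
  set T : Finset (𝒳 × (𝒳 → ℕ)) := Finset.univ ×ˢ Lbig with hT
  have hLa_sub : ∀ a, La a ⊆ Lbig := fun a =>
    Finset.subset_biUnion_of_mem La (Finset.mem_univ a)
  have hT_mem : ∀ y : 𝒳 × (𝒳 → ℕ), y ∈ T ↔ y.2 ∈ Lbig := by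
    intro y; simp [hT, Finset.mem_product]
  have hc_zeroT : ∀ y ∉ T, c y = 0 := by
    intro y hy
    have : y.2 ∉ Lbig := fun h => hy ((hT_mem y).2 h)
    exact hc_zero y.1 y.2 (fun h => this (hLa_sub y.1 h))
  have hνn_zero : ∀ y ∉ T, νn y = 0 := by
    intro y hy; simp [hνn, hc_zeroT y hy]
  have hkn : ∑ a, ((k a : ℕ) : ℝ) = (n : ℝ) := by
    have : ∑ a, ((k a : ℕ) : ℝ) = ∑ a, (n : ℝ) * ωn a :=
      Finset.sum_congr rfl (fun a _ => (hk a).symm)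
    rw [this, ← Finset.mul_sum, hωn1, mul_one]
  have hinner : ∀ (f : 𝒳 × (𝒳 → ℕ) → ℕ),
      (∀ a ℓ, ℓ ∉ La a → f (a, ℓ) = 0) →
      ∀ a, ∑ ℓ ∈ Lbig, f (a, ℓ) = ∑ ℓ ∈ La a, f (a, ℓ) := by
    intro f hf a
    refine (Finset.sum_subset (hLa_sub a) ?_).symm
    intro ℓ _ hℓ
    exact hf a ℓ hℓ
  have hTsum : ∑ y ∈ T, νn y = 1 := by
    have h1' : ∑ y ∈ T, νn y = ∑ a, ∑ ℓ ∈ Lbig, νn (a, ℓ) := by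
      rw [hT, Finset.sum_product]
    have h2' : ∀ a, ∑ ℓ ∈ Lbig, νn (a, ℓ) = ((k a : ℕ) : ℝ) / n := by
      intro a
      have hx : ∑ ℓ ∈ Lbig, νn (a, ℓ) = ∑ ℓ ∈ La a, νn (a, ℓ) := by
        refine (Finset.sum_subset (hLa_sub a) ?_).symm
        intro ℓ _ hℓ
        exact hνn_zero_fib a ℓ hℓ
      rw [hx, hsumνn_fib a]
    rw [h1', Finset.sum_congr rfl (fun a _ => h2' a), ← Finset.sum_div, hkn,
      div_self hn0']
  have hpmf : IsPMF νn := by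
    constructor
    · intro y; simp only [hνn]; positivity
    · have := hasSum_sum_of_ne_finset_zero (L := SummationFilter.unconditional _) (s := T) hνn_zero
      rwa [hTsum] at this
  -- integrality
  have hint : ∀ y, ∃ cc : ℕ, (n:ℝ) * νn y = cc := by
    intro y
    refine ⟨c y, ?_⟩
    simp only [hνn]
    field_simp
  -- total variation estimate
  refine ⟨νn, hpmf, hint, funext hmargn, hpairn, ?_⟩
  set W : Finset (𝒳 × (𝒳 → ℕ)) := T ∪ S with hW
  have hTW : T ⊆ W := Finset.subset_union_left
  have hSW : S ⊆ W := Finset.subset_union_right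
  have sumνn : Summable νn := summable_of_ne_finset_zero hνn_zero
  have hsumd : Summable (fun y => |νn y - ν y|) := (sumνn.sub hν1.summable).abs
  have split := Summable.sum_add_tsum_compl (s := W) hsumd
  have splitν := Summable.sum_add_tsum_compl (s := W) hν1.summable
  have tailνeq : ∑' (y : ↥((↑W : Set (𝒳 × (𝒳 → ℕ)))ᶜ)), ν ↑y = 1 - ∑ y ∈ W, ν y := by
    rw [hν1.tsum_eq] at splitν; linarith
  have taileq : ∑' (y : ↥((↑W : Set (𝒳 × (𝒳 → ℕ)))ᶜ)), |νn ↑y - ν ↑y|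
      = ∑' (y : ↥((↑W : Set (𝒳 × (𝒳 → ℕ)))ᶜ)), ν ↑y := by
    refine tsum_congr (fun y => ?_)
    have hyW : (y : 𝒳 × (𝒳 → ℕ)) ∉ W := by
      have h' := y.2
      simp only [Set.mem_compl_iff, Finset.mem_coe] at h'
      exact h'
    rw [hνn_zero _ (fun h => hyW (hTW h)), zero_sub, abs_neg, abs_of_nonneg (hν0 _)]
  -- the excess part e
  set e : 𝒳 × (𝒳 → ℕ) → ℕ := fun y =>
    (if y.2 = sv y.1 then 1 else 0) + (if y.2 = 0 then R y.1 - 1 else 0) with he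
  have hce : ∀ y, c y = m y + e y := by
    intro y; simp only [hc, he]; omega
  have he_zero : ∀ a ℓ, ℓ ∉ La a → e (a, ℓ) = 0 := by
    intro a ℓ hℓ
    have h2' : ℓ ≠ sv a := fun h => hℓ (h ▸ hsv_mem a)
    have h3' : ℓ ≠ 0 := fun h => hℓ (h ▸ hzero_mem a)
    simp [he, h2', h3']
  have hsum_e : ∀ a, ∑ ℓ ∈ La a, e (a, ℓ) = R a := by
    intro a
    rw [show ∑ ℓ ∈ La a, e (a, ℓ) = (∑ ℓ ∈ La a, if ℓ = sv a then 1 else 0)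
        + (∑ ℓ ∈ La a, if ℓ = 0 then R a - 1 else 0) by
      simp only [he, Finset.sum_add_distrib],
      Finset.sum_ite_eq' (La a) (sv a) (fun _ => 1),
      Finset.sum_ite_eq' (La a) (0 : 𝒳 → ℕ) (fun _ => R a - 1),
      if_pos (hsv_mem a), if_pos (hzero_mem a)]
    have := hR1 a
    omega
  have he_zeroT : ∀ y ∉ T, e y = 0 := by
    intro y hy
    have : y.2 ∉ Lbig := fun h => hy ((hT_mem y).2 h)
    exact he_zero y.1 y.2 (fun h => this (hLa_sub y.1 h))
  have hWe : ∑ y ∈ W, e y = ∑ a, R a := by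
    have h1' : ∑ y ∈ W, e y = ∑ y ∈ T, e y := by
      refine (Finset.sum_subset hTW ?_).symm
      intro y _ hy
      exact he_zeroT y hy
    rw [h1', hT, Finset.sum_product]
    refine Finset.sum_congr rfl (fun a _ => ?_)
    rw [hinner e (fun a ℓ h => he_zero a ℓ h) a, hsum_e a]
  -- lower bound on the floor total
  have hSν_le1 : ∑ y ∈ S, ν y ≤ 1 := by
    rw [← hν1.tsum_eq]
    exact Summable.sum_le_tsum S (fun y _ => hν0 y) hν1.summable
  have hMtotS : ∑ a, (Mtot a : ℝ) = ∑ y ∈ S, (m y : ℝ) := by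
    rw [show ∑ a, (Mtot a : ℝ) = ∑ a, ∑ y ∈ S.filter (fun y => y.1 = a), (m y : ℝ) by
      refine Finset.sum_congr rfl (fun a _ => ?_); simp [hMtot]]
    exact Finset.sum_fiberwise S (fun y => y.1) (fun y => (m y : ℝ))
  have hMtot_ge : (1-δ) * ((n:ℝ) * ∑ y ∈ S, ν y) - S.card ≤ ∑ a, (Mtot a : ℝ) := by
    rw [hMtotS]
    calc (1-δ) * ((n:ℝ) * ∑ y ∈ S, ν y) - S.card
        = ∑ y ∈ S, ((1-δ) * ((n:ℝ) * ν y) - 1) := by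
          rw [Finset.sum_sub_distrib, Finset.sum_const, nsmul_eq_mul, mul_one,
            Finset.mul_sum, Finset.mul_sum]
      _ ≤ ∑ y ∈ S, (m y : ℝ) := Finset.sum_le_sum (fun y hy => hm_ge y hy)
  have hRsum : ∑ a, (R a : ℝ) = (n:ℝ) - ∑ a, (Mtot a : ℝ) := by
    rw [show ∑ a, (R a : ℝ) = ∑ a, ((k a : ℝ) - (Mtot a : ℝ)) by
      exact Finset.sum_congr rfl (fun a _ => hRcast a), Finset.sum_sub_distrib, hkn]
  -- pointwise bounds
  have hinv : (0:ℝ) < 1 / n := by positivity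
  have hptS : ∀ y ∈ S, |(m y : ℝ)/n - ν y| ≤ δ * ν y + 1/n := by
    intro y hy
    have hub : (m y : ℝ)/n ≤ (1-δ) * ν y := by
      rw [div_le_iff₀ hn0]
      calc (m y : ℝ) ≤ (1-δ) * ((n:ℝ) * ν y) := hm_le y
        _ = (1-δ) * ν y * n := by ring
    have hlb : (1-δ) * ν y - 1/n ≤ (m y : ℝ)/n := by
      rw [le_div_iff₀ hn0]
      have := hm_ge y hy
      calc ((1-δ) * ν y - 1/n) * n = (1-δ) * ((n:ℝ) * ν y) - (1/n) * n := by ring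
        _ = (1-δ) * ((n:ℝ) * ν y) - 1 := by rw [one_div_mul_cancel hn0']
        _ ≤ (m y : ℝ) := this
    have hν0y := hν0 y
    rw [abs_le]
    constructor <;> nlinarith
  have hdecomp : ∀ y, |νn y - ν y| ≤ |(m y : ℝ)/n - ν y| + (e y : ℝ)/n := by
    intro y
    have : νn y = (m y : ℝ)/n + (e y : ℝ)/n := by
      have := hce y
      simp only [hνn, this]
      push_cast
      ring
    rw [this]
    calc |(m y : ℝ)/n + (e y : ℝ)/n - ν y| ≤ |(m y : ℝ)/n - ν y| + |(e y : ℝ)/n| := by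
          have : (m y : ℝ)/n + (e y : ℝ)/n - ν y = ((m y : ℝ)/n - ν y) + (e y : ℝ)/n := by ring
          rw [this]
          exact abs_add_le _ _
      _ = |(m y : ℝ)/n - ν y| + (e y : ℝ)/n := by
          rw [abs_of_nonneg (by positivity : (0:ℝ) ≤ (e y : ℝ)/n)]
  -- sum over W
  have hWsum : ∑ y ∈ W, |νn y - ν y|
      ≤ (δ * ∑ y ∈ S, ν y + S.card / n) + (∑ y ∈ W, ν y - ∑ y ∈ S, ν y)
        + (∑ a, (R a : ℝ)) / n := by
    have step1 : ∑ y ∈ W, |νn y - ν y|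
        ≤ ∑ y ∈ W, |(m y : ℝ)/n - ν y| + ∑ y ∈ W, (e y : ℝ)/n := by
      rw [← Finset.sum_add_distrib]
      exact Finset.sum_le_sum (fun y _ => hdecomp y)
    have step2 : ∑ y ∈ W, (e y : ℝ)/n = (∑ a, (R a : ℝ)) / n := by
      rw [← Finset.sum_div]
      congr 1
      rw [← Nat.cast_sum, hWe, Nat.cast_sum]
    have step3 : ∑ y ∈ W, |(m y : ℝ)/n - ν y|
        ≤ (δ * ∑ y ∈ S, ν y + S.card / n) + (∑ y ∈ W, ν y - ∑ y ∈ S, ν y) := by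
      have hsd : ∑ y ∈ W \ S, |(m y : ℝ)/n - ν y| + ∑ y ∈ S, |(m y : ℝ)/n - ν y|
          = ∑ y ∈ W, |(m y : ℝ)/n - ν y| := Finset.sum_sdiff hSW
      have hout : ∑ y ∈ W \ S, |(m y : ℝ)/n - ν y| = ∑ y ∈ W \ S, ν y := by
        refine Finset.sum_congr rfl (fun y hy => ?_)
        have : y ∉ S := (Finset.mem_sdiff.1 hy).2
        rw [hm_zero y this]
        simp [abs_of_nonneg (hν0 y)]
      have houtν : ∑ y ∈ W \ S, ν y = ∑ y ∈ W, ν y - ∑ y ∈ S, ν y := by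
        have := Finset.sum_sdiff (f := ν) hSW
        linarith
      have hin : ∑ y ∈ S, |(m y : ℝ)/n - ν y| ≤ δ * ∑ y ∈ S, ν y + S.card / n := by
        calc ∑ y ∈ S, |(m y : ℝ)/n - ν y| ≤ ∑ y ∈ S, (δ * ν y + 1/n) :=
              Finset.sum_le_sum hptS
          _ = δ * ∑ y ∈ S, ν y + S.card / n := by
              rw [Finset.sum_add_distrib, ← Finset.mul_sum, Finset.sum_const,
                nsmul_eq_mul, mul_one_div]
      linarith
    linarith
  -- final assembly
  rw [dTV, ← split, taileq, tailνeq]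
  have hRn : (∑ a, (R a : ℝ)) / n ≤ 1 - (1-δ) * ∑ y ∈ S, ν y + S.card / n := by
    rw [div_le_iff₀ hn0]
    have h' := hMtot_ge
    have : (∑ a, (R a : ℝ)) ≤ (n:ℝ) - ((1-δ) * ((n:ℝ) * ∑ y ∈ S, ν y) - S.card) := by
      rw [hRsum]; linarith
    calc (∑ a, (R a : ℝ)) ≤ (n:ℝ) - (1-δ) * ((n:ℝ) * ∑ y ∈ S, ν y) + S.card := by linarith
      _ = (1 - (1-δ) * ∑ y ∈ S, ν y + (S.card : ℝ) / n) * n := by field_simp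
  have ht1 : 1 - δ' ≤ ∑ y ∈ S, ν y := hS
  have hprod : (1-δ) * (1-δ') ≤ (1-δ) * ∑ y ∈ S, ν y :=
    mul_le_mul_of_nonneg_left ht1 h1δ.le
  nlinarith [hWsum, hRn, hSν_le1]



set_option maxHeartbeats 800000 in
/-- Lemma 4.7 (approximation step 2): approximation of `ν` by empirical-type measures
with prescribed colour and pair measures. -/
theorem approximation_step2 (𝒳 : Type) [Fintype 𝒳] [DecidableEq 𝒳]
    (ω : ℕ → 𝒳 → ℝ)
    (hωMn : ∀ n : ℕ, (∀ a, 0 ≤ ω n a) ∧ (∑ a, ω n a) = 1 ∧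
      ∀ a, ∃ k : ℕ, (n : ℝ) * ω n a = (k : ℝ))
    (ωl : 𝒳 → ℝ) (hωconv : ∀ a, Tendsto (fun n : ℕ => ω n a) atTop (𝓝 (ωl a)))
    (hωpos : ∀ a, 0 < ωl a)
    (ϖ : ℕ → 𝒳 → 𝒳 → ℝ)
    (hϖSn : ∀ n : ℕ, (∀ a b, 0 ≤ ϖ n a b) ∧ (∀ a b, ϖ n a b = ϖ n b a) ∧
      ∀ a b, ∃ k : ℕ, (n : ℝ) * ϖ n a b / (1 + if a = b then 1 else 0) = (k : ℝ))
    (ϖl : 𝒳 → 𝒳 → ℝ) (hϖconv : ∀ a b, Tendsto (fun n : ℕ => ϖ n a b) atTop (𝓝 (ϖl a b)))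
    (ν : (𝒳 × (𝒳 → ℕ)) → ℝ) (hν : IsPMF ν) (hmarg : marg ν = ωl)
    (hsub : SubConsistent ϖl ν) (ε : ℝ) (hε : 0 < ε) :
    ∃ N : ℕ, ∀ n ≥ N, ∃ νn : (𝒳 × (𝒳 → ℕ)) → ℝ, IsPMF νn ∧
      (∀ y, ∃ k : ℕ, (n : ℝ) * νn y = (k : ℝ)) ∧ marg νn = ω n ∧
      (∀ a b, pairOf νn a b = ϖ n a b) ∧ dTV νn ν ≤ ε := by
  classical
  have hν0 := hν.1
  have hν1 := hν.2
  have hϖn0 : ∀ n a b, 0 ≤ ϖ n a b := fun n => (hϖSn n).1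
  have hϖl0 : ∀ a b, 0 ≤ ϖl a b := fun a b =>
    ge_of_tendsto' (hϖconv a b) (fun n => hϖn0 n a b)
  have hsubfin : ∀ (a b : 𝒳) (G : Finset (𝒳 → ℕ)),
      ∑ ℓ ∈ G, ν (a,ℓ) * (ℓ b : ℝ) ≤ ϖl a b := by
    intro a b G
    have h1 : ∀ ℓ : 𝒳 → ℕ, 0 ≤ ν (a,ℓ) * (ℓ b : ℝ) := fun ℓ =>
      mul_nonneg (hν0 _) (Nat.cast_nonneg _)
    have h2 : ENNReal.ofReal (∑ ℓ ∈ G, ν (a,ℓ) * (ℓ b : ℝ)) ≤ ENNReal.ofReal (ϖl a b) := by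
      rw [ENNReal.ofReal_sum_of_nonneg (fun ℓ _ => h1 ℓ)]
      exact le_trans (ENNReal.sum_le_tsum G) (hsub a b)
    exact (ENNReal.ofReal_le_ofReal_iff (hϖl0 a b)).1 h2
  set δ : ℝ := min (ε/4) (1/2) with hδdef
  have hδpos : 0 < δ := lt_min (by linarith) (by norm_num)
  have hδhalf : δ ≤ 1/2 := min_le_right _ _
  have hδε : δ ≤ ε/4 := min_le_left _ _
  obtain ⟨S, hS⟩ : ∃ S : Finset (𝒳 × (𝒳 → ℕ)), 1 - δ ≤ ∑ y ∈ S, ν y := by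
    have h := hν1
    rw [HasSum] at h
    have h' := h.eventually_const_lt (show 1 - δ < 1 by linarith)
    exact (h'.mono fun S hS => hS.le).exists
  have E1 : ∀ a, ∀ᶠ n : ℕ in atTop, (1-δ) * ωl a + 1/(n:ℝ) < ω n a := by
    intro a
    have ht : Tendsto (fun n : ℕ => ω n a - 1/(n:ℝ)) atTop (𝓝 (ωl a)) := by
      have := (hωconv a).sub tendsto_one_div_atTop_nhds_zero_nat
      simpa using this
    have hlt : (1-δ) * ωl a < ωl a := by nlinarith [hωpos a]
    exact (ht.eventually_const_lt hlt).mono (fun n hn => by linarith)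
  have E2 : ∀ a b, ∀ᶠ n : ℕ in atTop, (1-δ) * ϖl a b ≤ ϖ n a b := by
    intro a b
    rcases eq_or_lt_of_le (hϖl0 a b) with h|h
    · refine Eventually.of_forall (fun n => ?_)
      rw [← h, mul_zero]
      exact hϖn0 n a b
    · have hlt : (1-δ) * ϖl a b < ϖl a b := by nlinarith
      exact ((hϖconv a b).eventually_const_lt hlt).mono (fun n hn => hn.le)
  have E3 : ∀ᶠ n : ℕ in atTop, ((S.card : ℝ))/(n:ℝ) ≤ ε/2 := by
    have h := (tendsto_const_div_atTop_nhds_zero_nat (S.card : ℝ)).eventually_lt_const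
      (show (0:ℝ) < ε/2 by linarith)
    exact h.mono fun n hn => hn.le
  have Eall := ((eventually_all.2 E1).and
    ((eventually_all.2 (fun a => eventually_all.2 (E2 a))).and
      (E3.and (eventually_ge_atTop 1))))
  obtain ⟨N, hN⟩ := eventually_atTop.1 Eall
  refine ⟨N, fun n hn => ?_⟩
  obtain ⟨e1, e2, e3, e4⟩ := hN n hn
  choose k hk using (hωMn n).2.2
  have hKex : ∀ a b, ∃ K : ℕ, (n:ℝ) * ϖ n a b = K := by
    intro a b
    obtain ⟨k', hk'⟩ := (hϖSn n).2.2 a b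
    by_cases hab : a = b
    · refine ⟨2*k', ?_⟩
      rw [if_pos hab] at hk'
      have : (n:ℝ) * ϖ n a b / 2 = k' := by norm_num at hk' ⊢; linarith
      push_cast
      linarith
    · refine ⟨k', ?_⟩
      rw [if_neg hab] at hk'
      norm_num at hk'
      linarith
  choose K hK using hKex
  have hmargfun : ∀ a, marg ν a = ωl a := fun a => by rw [hmarg]
  obtain ⟨νn, hpmf, hint, hmargn, hpairn, hdtv⟩ :=
    exists_good n e4 (ω n) (hωMn n).2.1 k hk (ϖ n) K hK ωl ϖl ν hν0 hν1 hmargfun hsubfin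
      δ δ hδpos hδhalf hδpos.le S hS e1 e2
  exact ⟨νn, hpmf, hint, hmargn, hpairn, by linarith⟩


end ColoredLDP
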